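/- For the 4-parameter Lie group manifold, the Lee form θ1 of F1 has components (θ1)1 = -λ4, (θ1)2 = λ3, (θ1)3 = -λ2, (θ1)4 = λ1, and its exterior derivative satisfies dθ1(X1,X2) = λ1² + λ2², so θ1 is not closed whenever (λ1,λ2,λ3,λ4) ≠ 0 with λ1²+λ2² ≠ 0. -/

import Mathlib

noncomputable section

/-- The bracket of the 4-parametric family of Lie algebras on `ℝ⁴`, extended
bilinearly from `[X1,X3]=λ2X2+λ4X4`, `[X2,X4]=λ1X1+λ3X3`, `[X2,X3]=-λ2X1-λ3X4`,
`[X3,X4]=-λ4X1+λ3X2`, `[X4,X1]=λ1X2+λ4X3`, `[X2,X1]=-λ2X3+λ1X4`. -/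
def lieBr (l1 l2 l3 l4 : ℝ) (x y : Fin 4 → ℝ) : Fin 4 → ℝ :=
  let p : Fin 4 → Fin 4 → ℝ := fun i j => x i * y j - x j * y i
  ![-l2 * p 1 2 + l1 * p 1 3 - l4 * p 2 3,
    l2 * p 0 2 - l1 * p 0 3 + l3 * p 2 3,
    l2 * p 0 1 - l4 * p 0 3 + l3 * p 1 3,
    -l1 * p 0 1 + l4 * p 0 2 - l3 * p 1 2]

/-- The pseudo-Riemannian metric `g = diag(1,1,-1,-1)` in the basis `{X1,…,X4}`. -/
def gm (x y : Fin 4 → ℝ) : ℝ :=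
  x 0 * y 0 + x 1 * y 1 - x 2 * y 2 - x 3 * y 3

/-- The basis vectors `X1, X2, X3, X4` of `ℝ⁴`. -/
def bX (i : Fin 4) : Fin 4 → ℝ := Pi.single i 1

/-- The signs `gⁱⁱ` of the (diagonal) metric. -/
def eps : Fin 4 → ℝ := ![1, 1, -1, -1]

/-- The Levi-Civita connection `∇ₓy = ½[x,y]` of the left-invariant metric. -/
def nab (l1 l2 l3 l4 : ℝ) (x y : Fin 4 → ℝ) : Fin 4 → ℝ :=
  (1 / 2 : ℝ) • lieBr l1 l2 l3 l4 x y

/-- `J1 X1 = X2, J1 X2 = -X1, J1 X3 = -X4, J1 X4 = X3`. -/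
def Jone (x : Fin 4 → ℝ) : Fin 4 → ℝ := ![-x 1, x 0, x 3, -x 2]

/-- `J2 X1 = X3, J2 X2 = X4, J2 X3 = -X1, J2 X4 = -X2`. -/
def Jtwo (x : Fin 4 → ℝ) : Fin 4 → ℝ := ![-x 2, -x 3, x 0, x 1]

/-- `J3 = J1 ∘ J2`. -/
def Jthree (x : Fin 4 → ℝ) : Fin 4 → ℝ := Jone (Jtwo x)

/-- `(∇ₓ Jα) y = ∇ₓ(Jα y) - Jα(∇ₓ y)`. -/
def covJ (l1 l2 l3 l4 : ℝ) (J : (Fin 4 → ℝ) → (Fin 4 → ℝ)) (x y : Fin 4 → ℝ) :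
    Fin 4 → ℝ :=
  nab l1 l2 l3 l4 x (J y) - J (nab l1 l2 l3 l4 x y)

/-- The square norm `‖∇Jα‖² = gⁱʲ gᵏˡ g((∇ᵢJα)Xₖ, (∇ⱼJα)Xₗ)`. -/
def normCovJ (l1 l2 l3 l4 : ℝ) (J : (Fin 4 → ℝ) → (Fin 4 → ℝ)) : ℝ :=
  ∑ i : Fin 4, ∑ k : Fin 4, eps i * eps k *
    gm (covJ l1 l2 l3 l4 J (bX i) (bX k)) (covJ l1 l2 l3 l4 J (bX i) (bX k))

/-- The structural tensor `F1(x,y,z) = g((∇ₓJ1)y, z)`. -/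
def Fone (l1 l2 l3 l4 : ℝ) (x y z : Fin 4 → ℝ) : ℝ :=
  gm (covJ l1 l2 l3 l4 Jone x y) z

/-- The Lee form `θ1(z) = gⁱʲ F1(Xi, Xj, z)`. -/
def theta1 (l1 l2 l3 l4 : ℝ) (z : Fin 4 → ℝ) : ℝ :=
  ∑ i : Fin 4, eps i * Fone l1 l2 l3 l4 (bX i) (bX i) z

/-- The Lee form `θ1` has components `(-λ4, λ3, -λ2, λ1)`, its exterior derivative
satisfies `dθ1(X1,X2) = λ1² + λ2²` (where `dθ(X,Y) = -θ([X,Y])`), so `θ1` is not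
closed whenever `λ1² + λ2² ≠ 0`. -/
theorem stmt18 (l1 l2 l3 l4 : ℝ) :
    theta1 l1 l2 l3 l4 (bX 0) = -l4 ∧
    theta1 l1 l2 l3 l4 (bX 1) = l3 ∧
    theta1 l1 l2 l3 l4 (bX 2) = -l2 ∧
    theta1 l1 l2 l3 l4 (bX 3) = l1 ∧
    -theta1 l1 l2 l3 l4 (lieBr l1 l2 l3 l4 (bX 0) (bX 1)) = l1 ^ 2 + l2 ^ 2 ∧
    (l1 ^ 2 + l2 ^ 2 ≠ 0 →
      -theta1 l1 l2 l3 l4 (lieBr l1 l2 l3 l4 (bX 0) (bX 1)) ≠ 0) := by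
  have h5 : -theta1 l1 l2 l3 l4 (lieBr l1 l2 l3 l4 (bX 0) (bX 1)) = l1 ^ 2 + l2 ^ 2 := by
    simp only [theta1, Fone, covJ, nab, lieBr, gm, Jone, bX, eps, Fin.sum_univ_four,
      Pi.sub_apply, Pi.smul_apply, smul_eq_mul, Pi.single_apply, Matrix.cons_val]
    norm_num [Fin.ext_iff, show ((3:Fin 4):ℕ) = 3 from rfl, show ((2:Fin 4):ℕ) = 2 from rfl]
    ring
  refine ⟨?_, ?_, ?_, ?_, h5, fun h => h5 ▸ h⟩ <;>
  · simp only [theta1, Fone, covJ, nab, lieBr, gm, Jone, bX, eps, Fin.sum_univ_four,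
      Pi.sub_apply, Pi.smul_apply, smul_eq_mul, Pi.single_apply, Matrix.cons_val]
    norm_num [Fin.ext_iff, show ((3:Fin 4):ℕ) = 3 from rfl, show ((2:Fin 4):ℕ) = 2 from rfl]
    ring
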